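/- Let G be a graph with disjoint vertex sets A_1, ..., A_m (m ≥ 1) such that each G[A_i] is connected, there is an edge between A_i and A_{i+1} for each i < m, and there is no edge between A_i and A_j whenever j > i+1. Then for any vertex u ∈ A_1 and v ∈ A_m, G contains an induced path from u's set to v's set with at least m vertices; in particular G contains an induced path on at least m vertices. -/

import Mathlib

open SimpleGraph

/-- There is a walk from the start to the `i`-th vertex of a walk, of length at most `i`. -/
lemma walk_to_getVert {V : Type*} {G : SimpleGraph V} {u v : V} (p : G.Walk u v) (i : ℕ) :
    ∃ w : G.Walk u (p.getVert i), w.length ≤ i := by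
  induction p generalizing i with
  | nil => exact ⟨Walk.nil, by simp⟩
  | @cons a b c h q ih =>
    cases i with
    | zero => exact ⟨Walk.nil.copy rfl (q.cons h).getVert_zero.symm, by simp⟩
    | succ i =>
      obtain ⟨w, hw⟩ := ih i
      exact ⟨Walk.cons h w, by simpa using hw⟩

/-- There is a walk from the `i`-th vertex of a walk to its end,
of length at most `p.length - i`. -/
lemma walk_from_getVert {V : Type*} {G : SimpleGraph V} {u v : V} (p : G.Walk u v) (i : ℕ) :
    ∃ w : G.Walk (p.getVert i) v, w.length ≤ p.length - i := by
  induction p generalizing i with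
  | nil => exact ⟨Walk.nil, by simp⟩
  | @cons a b c h q ih =>
    cases i with
    | zero =>
      exact ⟨(q.cons h).copy (q.cons h).getVert_zero.symm rfl, by simp⟩
    | succ i =>
      obtain ⟨w, hw⟩ := ih i
      exact ⟨w, by simp only [Walk.length_cons]; exact hw.trans (by omega)⟩

theorem stmt_8 {V : Type*} [Fintype V] (G : SimpleGraph V) (m : ℕ) (hm : 1 ≤ m)
    (A : Fin m → Set V)
    (hdisj : ∀ i j : Fin m, i ≠ j → Disjoint (A i) (A j))
    (hconn : ∀ i : Fin m, (G.induce (A i)).Connected)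
    (hedge : ∀ i : Fin m, (h : (i : ℕ) + 1 < m) →
      ∃ x ∈ A i, ∃ y ∈ A ⟨(i : ℕ) + 1, h⟩, G.Adj x y)
    (hnon : ∀ i j : Fin m, (i : ℕ) + 1 < (j : ℕ) →
      ∀ x ∈ A i, ∀ y ∈ A j, ¬ G.Adj x y)
    (u v : V) (hu : u ∈ A ⟨0, by omega⟩) (hv : v ∈ A ⟨m - 1, by omega⟩) :
    ∃ n : ℕ, ∃ hn : m ≤ n, ∃ f : pathGraph n ↪g G,
      f ⟨0, by omega⟩ = u ∧ f ⟨n - 1, by omega⟩ = v := by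
  classical
  set S : Set V := ⋃ i, A i with hS
  have hsub : ∀ i : Fin m, A i ⊆ S := fun i => Set.subset_iUnion A i
  set H : SimpleGraph S := G.induce S with hH
  -- uniqueness of the block containing a vertex
  have uniq : ∀ {x : V} {i j : Fin m}, x ∈ A i → x ∈ A j → i = j := by
    intro x i j hi hj
    by_contra hne
    exact (Set.disjoint_left.mp (hdisj i j hne)) hi hj
  -- reachability within a block, inside H
  have reach_in : ∀ (i : Fin m) (x y : V) (hx : x ∈ A i) (hy : y ∈ A i),
      H.Reachable ⟨x, hsub i hx⟩ ⟨y, hsub i hy⟩ := by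
    intro i x y hx hy
    have h := (hconn i).preconnected ⟨x, hx⟩ ⟨y, hy⟩
    exact h.map (induceHomOfLE G (hsub i)).toHom
  have u' : S := ⟨u, hsub _ hu⟩
  have hum : u ∈ S := hsub _ hu
  have hvm : v ∈ S := hsub _ hv
  -- chain reachability from u to any vertex of a later block
  have claim : ∀ k : ℕ, ∀ hk : k < m, ∀ y : V, ∀ hy : y ∈ A ⟨k, hk⟩,
      H.Reachable ⟨u, hum⟩ ⟨y, hsub _ hy⟩ := by
    intro k
    induction k with
    | zero => intro hk y hy; exact reach_in ⟨0, hk⟩ u y hu hy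
    | succ k ih =>
      intro hk y hy
      have hk' : k < m := by omega
      obtain ⟨x, hx, z, hz, hxz⟩ := hedge ⟨k, hk'⟩ hk
      have h1 : H.Reachable ⟨u, hum⟩ ⟨x, hsub _ hx⟩ := ih hk' x hx
      have h2 : H.Adj ⟨x, hsub _ hx⟩ ⟨z, hsub _ hz⟩ := hxz
      have h3 : H.Reachable ⟨z, hsub _ hz⟩ ⟨y, hsub _ hy⟩ := reach_in ⟨k + 1, hk⟩ z y hz hy
      exact (h1.trans h2.reachable).trans h3
  have hreach : H.Reachable ⟨u, hum⟩ ⟨v, hvm⟩ := claim (m - 1) (by omega) v hv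
  obtain ⟨p, hp⟩ := hreach.exists_walk_length_eq_dist
  set L := p.length with hL
  -- index of the block containing each vertex of the walk
  have hmemS : ∀ k : ℕ, ∃ i : Fin m, ((p.getVert k : S) : V) ∈ A i := by
    intro k
    exact Set.mem_iUnion.mp (p.getVert k).2
  let idx : ℕ → Fin m := fun k => Classical.choose (hmemS k)
  have hidx : ∀ k : ℕ, ((p.getVert k : S) : V) ∈ A (idx k) :=
    fun k => Classical.choose_spec (hmemS k)
  have hidx0 : idx 0 = ⟨0, by omega⟩ := by
    have h0 := hidx 0
    rw [p.getVert_zero] at h0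
    exact uniq h0 hu
  have hidxL : idx L = ⟨m - 1, by omega⟩ := by
    have h0 := hidx L
    rw [hL, p.getVert_length] at h0
    exact uniq h0 hv
  -- consecutive vertices lie in blocks with índices differing by at most one
  have step : ∀ k : ℕ, k < L → (idx (k + 1) : ℕ) ≤ (idx k : ℕ) + 1 := by
    intro k hk
    by_contra hgt
    push_neg at hgt
    have hadj : H.Adj (p.getVert k) (p.getVert (k + 1)) := p.adj_getVert_succ hk
    have hadj' : G.Adj ((p.getVert k : S) : V) ((p.getVert (k + 1) : S) : V) := hadj
    exact hnon (idx k) (idx (k + 1)) hgt _ (hidx k) _ (hidx (k + 1)) hadj'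
  have mono : ∀ k : ℕ, k ≤ L → (idx k : ℕ) ≤ k := by
    intro k
    induction k with
    | zero => intro _; rw [hidx0]
    | succ k ih =>
      intro hk
      have := step k (by omega)
      have := ih (by omega)
      omega
  have hmL : m ≤ L + 1 := by
    have h0 := mono L le_rfl
    rw [hidxL] at h0
    have : m - 1 ≤ L := by simpa using h0
    omega
  -- no strictly shorter route between vertices of the walk
  have short : ∀ i j : ℕ, i < j → j ≤ L →
      ∀ w : H.Walk (p.getVert i) (p.getVert j), ¬ (i + w.length + (L - j) < L) := by
    intro i j hij hjL w hlt
    obtain ⟨w1, hw1⟩ := walk_to_getVert p i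
    obtain ⟨w2, hw2⟩ := walk_from_getVert p j
    have hd := H.dist_le ((w1.append w).append w2)
    rw [← hp] at hd
    simp only [Walk.length_append] at hd
    omega
  -- non-consecutive vertices of the walk are non-adjacent, and vertices are distinct
  have hne : ∀ i j : ℕ, i < j → j ≤ L → p.getVert i ≠ p.getVert j := by
    intro i j hij hjL heq
    exact short i j hij hjL (Walk.nil.copy rfl heq) (by simp; omega)
  have hnadj : ∀ i j : ℕ, i + 1 < j → j ≤ L →
      ¬ H.Adj (p.getVert i) (p.getVert j) := by
    intro i j hij hjL hadj
    exact short i j (by omega) hjL hadj.toWalk (by simp [Walk.length_cons]; omega)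
  refine ⟨L + 1, hmL, ⟨⟨fun i => ((p.getVert i : S) : V), ?_⟩, ?_⟩, ?_, ?_⟩
  · -- injectivity
    intro i j hij
    simp only at hij
    have hij' : p.getVert (i : ℕ) = p.getVert (j : ℕ) := Subtype.ext hij
    rcases lt_trichotomy (i : ℕ) (j : ℕ) with h | h | h
    · exact absurd hij' (hne _ _ h (by omega))
    · exact Fin.ext h
    · exact absurd hij'.symm (hne _ _ h (by omega))
  · -- map_rel_iff
    intro i j
    simp only [Function.Embedding.coeFn_mk, pathGraph_adj]
    constructor
    · intro hadj
      have hadjH : H.Adj (p.getVert (i : ℕ)) (p.getVert (j : ℕ)) := hadj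
      rcases lt_trichotomy (i : ℕ) (j : ℕ) with h | h | h
      · left
        by_contra hne'
        exact hnadj (i : ℕ) (j : ℕ) (by omega) (by omega) hadjH
      · exfalso
        rw [Fin.ext h] at hadj
        exact G.irrefl hadj
      · right
        by_contra hne'
        exact hnadj (j : ℕ) (i : ℕ) (by omega) (by omega) hadjH.symm
    · intro hij
      rcases hij with h | h
      · have hlt : (i : ℕ) < L := by omega
        have := p.adj_getVert_succ hlt
        rw [h] at this
        exact this
      · have hlt : (j : ℕ) < L := by omega
        have := p.adj_getVert_succ hlt
        rw [h] at this
        exact this.symm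
  · show ((p.getVert 0 : S) : V) = u
    simp
  · simp only [RelEmbedding.coe_mk, Function.Embedding.coeFn_mk, Nat.add_sub_cancel]
    show ((p.getVert L : S) : V) = v
    rw [hL, p.getVert_length]
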